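/- Let δ_0 > 0 and δ_{i+1} = δ_i/(1+δ_i)^2, and define d_i = Π_{k=0}^{i} 1/(1+δ_k). Then there exists a constant C > 0 such that d_i ≤ C/√i for all i ≥ 1; in particular d_i = O(i^{-1/2}). -/

import Mathlib

theorem stmt6 (d : ℕ → ℝ) (h0 : 0 < d 0)
    (hrec : ∀ i, d (i+1) = d i / (1 + d i)^2) :
    ∃ C : ℝ, 0 < C ∧ ∀ i : ℕ, 1 ≤ i →
      (∏ k ∈ Finset.range (i+1), 1 / (1 + d k)) ≤ C / Real.sqrt i := by
  have hpos : ∀ n, 0 < d n := by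
    intro n
    induction n with
    | zero => exact h0
    | succ n ih =>
      rw [hrec]
      positivity
  have h1 : ∀ n, (0:ℝ) < 1 + d n := fun n => by linarith [hpos n]
  -- product identity: d (n+1) = d 0 * P_n ^ 2
  have hprod : ∀ n, d (n+1) = d 0 * (∏ k ∈ Finset.range (n+1), 1 / (1 + d k))^2 := by
    intro n
    induction n with
    | zero =>
      simp [hrec 0, div_pow]
      field_simp
    | succ n ih =>
      rw [Finset.prod_range_succ, mul_pow, ← mul_assoc, ← ih, hrec (n+1), div_pow]
      field_simp
  -- bound: 2 n ≤ 1 / d n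
  have hbd : ∀ n : ℕ, 2 * (n:ℝ) ≤ 1 / d n := by
    intro n
    induction n with
    | zero => simp; positivity
    | succ n ih =>
      have hdn := hpos n
      have : 1 / d (n+1) = 1 / d n + 2 + d n := by
        rw [hrec n]
        field_simp
        ring
      rw [this]
      push_cast
      linarith
  refine ⟨1 / Real.sqrt (2 * d 0), by positivity, ?_⟩
  intro i hi
  have hi' : (0:ℝ) < i := by exact_mod_cast hi
  set P := ∏ k ∈ Finset.range (i+1), 1 / (1 + d k) with hP
  have hPpos : 0 < P := Finset.prod_pos fun k _ => one_div_pos.mpr (h1 k)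
  have hd1 : d (i+1) ≤ 1 / (2 * (i:ℝ)) := by
    have hb := hbd (i+1)
    have hp := hpos (i+1)
    rw [le_div_iff₀ hp] at hb
    rw [le_div_iff₀ (by positivity)]
    push_cast at hb
    nlinarith
  have hsq : P ^ 2 ≤ 1 / (2 * d 0 * i) := by
    have := hprod i
    have h2 : d 0 * P ^ 2 ≤ 1 / (2 * (i:ℝ)) := by rw [← this]; exact hd1
    rw [le_div_iff₀ (by positivity)] at h2 ⊢
    nlinarith
  have hrhs : Real.sqrt (1 / (2 * d 0 * ↑i)) = 1 / Real.sqrt (2 * d 0) / Real.sqrt i := by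
    rw [show (1:ℝ)/(2*d 0*↑i) = (2*d 0)⁻¹ * (↑i)⁻¹ by field_simp,
      Real.sqrt_mul (by positivity), Real.sqrt_inv, Real.sqrt_inv]
    rw [one_div, div_eq_mul_inv]
  calc P = Real.sqrt (P ^ 2) := by rw [Real.sqrt_sq hPpos.le]
    _ ≤ Real.sqrt (1 / (2 * d 0 * i)) := Real.sqrt_le_sqrt hsq
    _ = 1 / Real.sqrt (2 * d 0) / Real.sqrt i := hrhs
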